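/- Let μ and ν be probability measures on ℝ^d that are absolutely continuous with densities f, g ∈ L¹(ℝ^d), and suppose both have finite p-th moments M_p(μ), M_p(ν) for some p > 1. Then for every 1 ≤ q < p there exists a constant C depending only on p and q such that W_q(μ,ν) ≤ C · (M_p(μ) + M_p(ν))^{1/p} · ‖f − g‖_{L¹}^{1/q − 1/p}. -/

import Mathlib

open MeasureTheory
open scoped ENNReal

/-- The `q`-Wasserstein distance, defined as the infimum over couplings `γ` of `μ` and `ν`
of `(∫ |x - y|^q dγ)^(1/q)`. -/
noncomputable def wassersteinDist {d : ℕ} (q : ℝ)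
    (μ ν : Measure (EuclideanSpace ℝ (Fin d))) : ℝ :=
  sInf { r : ℝ | ∃ γ : Measure (EuclideanSpace ℝ (Fin d) × EuclideanSpace ℝ (Fin d)),
    γ.fst = μ ∧ γ.snd = ν ∧ r = (∫ p, ‖p.1 - p.2‖ ^ q ∂γ) ^ (1 / q) }

/-- For probability measures `μ, ν` on `ℝ^d` with densities `f, g ∈ L¹` and
finite `p`-th moments (`p > 1`), for every `1 ≤ q < p` there is a constant `C = C(p,q)`
such that `W_q(μ,ν) ≤ C (M_p(μ) + M_p(ν))^{1/p} ‖f - g‖_{L¹}^{1/q - 1/p}`. -/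
theorem stmt0 (p q : ℝ) (hp : 1 < p) (hq1 : 1 ≤ q) (hqp : q < p) :
    ∃ C : ℝ, 0 < C ∧ ∀ (d : ℕ) (μ ν : Measure (EuclideanSpace ℝ (Fin d)))
      (f g : EuclideanSpace ℝ (Fin d) → ℝ),
      IsProbabilityMeasure μ → IsProbabilityMeasure ν →
      μ = volume.withDensity (fun x => ENNReal.ofReal (f x)) →
      ν = volume.withDensity (fun x => ENNReal.ofReal (g x)) →
      Integrable f → Integrable g →
      Integrable (fun x => ‖x‖ ^ p) μ → Integrable (fun x => ‖x‖ ^ p) ν →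
      wassersteinDist q μ ν ≤
        C * ((∫ x, ‖x‖ ^ p ∂μ) + ∫ x, ‖x‖ ^ p ∂ν) ^ (1 / p) *
          (∫ x, |f x - g x|) ^ (1 / q - 1 / p) := by
  have hq0 : (0:ℝ) < q := lt_of_lt_of_le one_pos hq1
  have hp0 : (0:ℝ) < p := lt_trans one_pos hp
  refine ⟨2 ^ ((q + 1) / q), Real.rpow_pos_of_pos two_pos _, ?_⟩
  intro d μ ν f g hμprob hνprob hμd hνd hf hg hMμ hMν
  -- RHS is nonneg
  have hRHS0 : 0 ≤ (2:ℝ) ^ ((q + 1) / q) *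
      ((∫ x, ‖x‖ ^ p ∂μ) + ∫ x, ‖x‖ ^ p ∂ν) ^ (1 / p) *
      (∫ x, |f x - g x|) ^ (1 / q - 1 / p) := by
    apply mul_nonneg (mul_nonneg (Real.rpow_nonneg two_pos.le _) ?_) ?_
    · exact Real.rpow_nonneg (add_nonneg
        (integral_nonneg fun x => Real.rpow_nonneg (norm_nonneg _) _)
        (integral_nonneg fun x => Real.rpow_nonneg (norm_nonneg _) _)) _
    · exact Real.rpow_nonneg (integral_nonneg fun x => abs_nonneg _) _
  -- the defining set is bounded below by 0
  have hbdd : BddBelow { r : ℝ | ∃ γ : Measure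
      (EuclideanSpace ℝ (Fin d) × EuclideanSpace ℝ (Fin d)),
      γ.fst = μ ∧ γ.snd = ν ∧ r = (∫ pr, ‖pr.1 - pr.2‖ ^ q ∂γ) ^ (1 / q) } := by
    refine ⟨0, ?_⟩
    rintro r ⟨γ, -, -, rfl⟩
    exact Real.rpow_nonneg
      (integral_nonneg fun pr => Real.rpow_nonneg (norm_nonneg _) _) _
  -- measurable representatives and splitting of the measures
  have hfae : AEMeasurable f (volume : Measure (EuclideanSpace ℝ (Fin d))) := hf.aemeasurable
  have hgae : AEMeasurable g (volume : Measure (EuclideanSpace ℝ (Fin d))) := hg.aemeasurable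
  set f₀ := hfae.mk f with hf₀
  set g₀ := hgae.mk g with hg₀
  have hf₀m : Measurable f₀ := hfae.measurable_mk
  have hg₀m : Measurable g₀ := hgae.measurable_mk
  have hff₀ : f =ᵐ[volume] f₀ := hfae.ae_eq_mk
  have hgg₀ : g =ᵐ[volume] g₀ := hgae.ae_eq_mk
  set F : EuclideanSpace ℝ (Fin d) → ℝ≥0∞ := fun x => ENNReal.ofReal (f₀ x) with hF
  set G : EuclideanSpace ℝ (Fin d) → ℝ≥0∞ := fun x => ENNReal.ofReal (g₀ x) with hG
  have hFm : Measurable F := ENNReal.measurable_ofReal.comp hf₀m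
  have hGm : Measurable G := ENNReal.measurable_ofReal.comp hg₀m
  have hμF : μ = volume.withDensity F := by
    rw [hμd]
    refine withDensity_congr_ae ?_
    filter_upwards [hff₀] with x hx
    simp only [hF]; rw [hx]
  have hνG : ν = volume.withDensity G := by
    rw [hνd]
    refine withDensity_congr_ae ?_
    filter_upwards [hgg₀] with x hx
    simp only [hG]; rw [hx]
  set m : EuclideanSpace ℝ (Fin d) → ℝ≥0∞ := fun x => min (F x) (G x) with hm
  have hmm : Measurable m := hFm.min hGm
  set α : Measure (EuclideanSpace ℝ (Fin d)) := volume.withDensity m with hα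
  set μ' : Measure (EuclideanSpace ℝ (Fin d)) :=
    volume.withDensity (fun x => F x - m x) with hμ'
  set ν' : Measure (EuclideanSpace ℝ (Fin d)) :=
    volume.withDensity (fun x => G x - m x) with hν'
  have hμsplit : μ = α + μ' := by
    rw [hμF, show F = m + (fun x => F x - m x) from
      funext fun x => (add_tsub_cancel_of_le (min_le_left (F x) (G x))).symm,
      withDensity_add_left hmm]
  have hνsplit : ν = α + ν' := by
    rw [hνG, show G = m + (fun x => G x - m x) from
      funext fun x => (add_tsub_cancel_of_le (min_le_right (F x) (G x))).symm,
      withDensity_add_left hmm]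
  have h1 : α Set.univ + μ' Set.univ = 1 := by
    rw [← Measure.add_apply, ← hμsplit, measure_univ]
  have h2 : α Set.univ + ν' Set.univ = 1 := by
    rw [← Measure.add_apply, ← hνsplit, measure_univ]
  have hαtop : α Set.univ ≠ ⊤ :=
    ne_top_of_le_ne_top ENNReal.one_ne_top (h1 ▸ le_self_add)
  have hmass : ν' Set.univ = μ' Set.univ :=
    (ENNReal.add_right_inj hαtop).mp (h2.trans h1.symm)
  set δ' : ℝ≥0∞ := μ' Set.univ with hδ'
  have hδle1 : δ' ≤ 1 := h1 ▸ le_add_self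
  have hδtop : δ' ≠ ⊤ := ne_top_of_le_ne_top ENNReal.one_ne_top hδle1
  -- bound δ' by the L¹ distance
  have hδ'le : δ' ≤ ENNReal.ofReal (∫ x, |f x - g x|) := by
    have habs : Integrable (fun x => |f₀ x - g₀ x|)
        (volume : Measure (EuclideanSpace ℝ (Fin d))) :=
      ((hf.congr hff₀).sub (hg.congr hgg₀)).abs
    have hptw : ∀ x, F x - m x ≤ ENNReal.ofReal |f₀ x - g₀ x| := by
      intro x
      rcases le_total (f₀ x) (g₀ x) with h | h
      · have hmx : m x = F x := min_eq_left (ENNReal.ofReal_le_ofReal h)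
        simp [hmx]
      · have hmx : m x = G x := min_eq_right (ENNReal.ofReal_le_ofReal h)
        rw [hmx]
        refine tsub_le_iff_right.mpr ?_
        rcases le_or_gt 0 (g₀ x) with hg0 | hg0
        · simp only [hF, hG]
          rw [← ENNReal.ofReal_add (abs_nonneg _) hg0]
          exact ENNReal.ofReal_le_ofReal
            (by rw [abs_of_nonneg (sub_nonneg.mpr h)]; linarith)
        · calc F x = ENNReal.ofReal (f₀ x) := rfl
            _ ≤ ENNReal.ofReal (|f₀ x - g₀ x|) := ENNReal.ofReal_le_ofReal
              (by rw [abs_of_nonneg (sub_nonneg.mpr h)]; linarith)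
            _ ≤ _ := le_self_add
    calc δ' = ∫⁻ x, (F x - m x) ∂(volume : Measure (EuclideanSpace ℝ (Fin d))) := by
          rw [hδ', hμ', withDensity_apply _ MeasurableSet.univ, setLIntegral_univ]
      _ ≤ ∫⁻ x, ENNReal.ofReal (|f₀ x - g₀ x|) ∂volume := lintegral_mono hptw
      _ = ENNReal.ofReal (∫ x, |f₀ x - g₀ x|) :=
          (ofReal_integral_eq_lintegral_ofReal habs
            (Filter.Eventually.of_forall fun x => abs_nonneg _)).symm
      _ = ENNReal.ofReal (∫ x, |f x - g x|) := by
          congr 1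
          refine integral_congr_ae ?_
          filter_upwards [hff₀, hgg₀] with x e1 e2
          rw [e1, e2]
  -- moments in ℝ≥0∞
  set Lμ : ℝ≥0∞ := ∫⁻ x, ENNReal.ofReal (‖x‖ ^ p) ∂μ with hLμ
  set Lν : ℝ≥0∞ := ∫⁻ x, ENNReal.ofReal (‖x‖ ^ p) ∂ν with hLν
  have hMμeq : (∫ x, ‖x‖ ^ p ∂μ) = Lμ.toReal := by
    rw [hLμ, integral_eq_lintegral_of_nonneg_ae
      (Filter.Eventually.of_forall fun x => Real.rpow_nonneg (norm_nonneg _) _)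
      hMμ.aestronglyMeasurable]
  have hMνeq : (∫ x, ‖x‖ ^ p ∂ν) = Lν.toReal := by
    rw [hLν, integral_eq_lintegral_of_nonneg_ae
      (Filter.Eventually.of_forall fun x => Real.rpow_nonneg (norm_nonneg _) _)
      hMν.aestronglyMeasurable]
  have hLμtop : Lμ ≠ ⊤ := hMμ.lintegral_lt_top.ne
  have hLνtop : Lν ≠ ⊤ := hMν.lintegral_lt_top.ne
  by_cases hδ : δ' = 0
  -- degenerate case : μ = ν
  · have hμ'0 : μ' = 0 := Measure.measure_univ_eq_zero.mp hδ
    have hν'0 : ν' = 0 := Measure.measure_univ_eq_zero.mp (hmass.trans hδ)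
    have hμν : μ = ν := by rw [hμsplit, hνsplit, hμ'0, hν'0]
    have hW : wassersteinDist q μ ν ≤ 0 := by
      refine csInf_le hbdd ?_
      refine ⟨μ.map (fun x => (x, x)), ?_, ?_, ?_⟩
      · rw [Measure.fst_map_prodMk (X := fun x => x)
          (measurable_id' : Measurable fun x => x), Measure.map_id']
      · rw [Measure.snd_map_prodMk (Y := fun x => x)
          (measurable_id' : Measurable fun x => x), Measure.map_id', hμν]
      · have hI : (∫ pr, ‖pr.1 - pr.2‖ ^ q ∂(μ.map (fun x => (x, x)))) = 0 := by
          rw [integral_map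
            (Measurable.prodMk (f := fun x => x) (g := fun x => x)
              measurable_id' measurable_id').aemeasurable
            (f := fun pr : EuclideanSpace ℝ (Fin d) × EuclideanSpace ℝ (Fin d) => ‖pr.1 - pr.2‖ ^ q)
            (((continuous_fst.sub continuous_snd).norm.rpow_const
              (fun x => Or.inr hq0.le)).aestronglyMeasurable)]
          simp [Real.zero_rpow (ne_of_gt hq0)]
        rw [hI, Real.zero_rpow (one_div_ne_zero (ne_of_gt hq0))]
    exact le_trans hW hRHS0
  -- main case
  · set μ'' := δ'⁻¹ • μ' with hμ''
    set ν'' := δ'⁻¹ • ν' with hν''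
    haveI : IsProbabilityMeasure μ'' := ⟨by
      rw [hμ'', Measure.smul_apply, smul_eq_mul, ENNReal.inv_mul_cancel hδ hδtop]⟩
    haveI : IsProbabilityMeasure ν'' := ⟨by
      rw [hν'', Measure.smul_apply, smul_eq_mul, hmass,
        ENNReal.inv_mul_cancel hδ hδtop]⟩
    set γ : Measure (EuclideanSpace ℝ (Fin d) × EuclideanSpace ℝ (Fin d)) :=
      α.map (fun x => (x, x)) + δ' • (μ''.prod ν'') with hγ
    have hγfst : γ.fst = μ := by
      rw [hγ, Measure.fst_add, Measure.fst_map_prodMk (X := fun x => x)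
        (measurable_id' : Measurable fun x => x), Measure.map_id']
      have hsm : (δ' • (μ''.prod ν'')).fst = δ' • (μ''.prod ν'').fst := by
        rw [Measure.fst, Measure.fst, Measure.map_smul]
      rw [hsm, Measure.fst_prod, hμ'', smul_smul,
        ENNReal.mul_inv_cancel hδ hδtop, one_smul, ← hμsplit]
    have hγsnd : γ.snd = ν := by
      rw [hγ, Measure.snd_add, Measure.snd_map_prodMk (Y := fun x => x)
        (measurable_id' : Measurable fun x => x), Measure.map_id']
      have hsm : (δ' • (μ''.prod ν'')).snd = δ' • (μ''.prod ν'').snd := by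
        rw [Measure.snd, Measure.snd, Measure.map_smul]
      rw [hsm, Measure.snd_prod, hν'', smul_smul,
        ENNReal.mul_inv_cancel hδ hδtop, one_smul, ← hνsplit]
    -- measurability facts
    have huq : Measurable (fun x : EuclideanSpace ℝ (Fin d) =>
        ENNReal.ofReal (‖x‖ ^ q)) :=
      ENNReal.measurable_ofReal.comp (measurable_norm.pow_const _)
    have hKm : Measurable (fun pr : EuclideanSpace ℝ (Fin d) × EuclideanSpace ℝ (Fin d) =>
        ENNReal.ofReal (‖pr.1 - pr.2‖ ^ q)) :=
      (ENNReal.continuous_ofReal.comp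
        ((continuous_fst.sub continuous_snd).norm.rpow_const
          (fun x => Or.inr hq0.le))).measurable
    -- the transport cost as a lintegral
    have hIeq : (∫ pr, ‖pr.1 - pr.2‖ ^ q ∂γ) =
        (∫⁻ pr, ENNReal.ofReal (‖pr.1 - pr.2‖ ^ q) ∂γ).toReal := by
      rw [integral_eq_lintegral_of_nonneg_ae
        (f := fun pr : EuclideanSpace ℝ (Fin d) × EuclideanSpace ℝ (Fin d) => ‖pr.1 - pr.2‖ ^ q)
        (Filter.Eventually.of_forall fun pr => Real.rpow_nonneg (norm_nonneg _) _)
        (((continuous_fst.sub continuous_snd).norm.rpow_const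
          (fun x => Or.inr hq0.le)).aestronglyMeasurable)]
    set L : ℝ≥0∞ := ∫⁻ pr, ENNReal.ofReal (‖pr.1 - pr.2‖ ^ q) ∂γ with hL
    -- the diagonal part contributes nothing
    have hLdiag : (∫⁻ pr, ENNReal.ofReal (‖pr.1 - pr.2‖ ^ q)
        ∂(α.map (fun x => (x, x)))) = 0 := by
      rw [lintegral_map hKm
        (Measurable.prodMk (f := fun x => x) (g := fun x => x)
          measurable_id' measurable_id')]
      simp [Real.zero_rpow (ne_of_gt hq0)]
    -- marginal lintegrals over the product
    have hP1 : (∫⁻ pr : EuclideanSpace ℝ (Fin d) × EuclideanSpace ℝ (Fin d),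
        ENNReal.ofReal (‖pr.1‖ ^ q) ∂(μ''.prod ν'')) =
        δ'⁻¹ * ∫⁻ x, ENNReal.ofReal (‖x‖ ^ q) ∂μ' := by
      have hum : Measurable (fun pr : EuclideanSpace ℝ (Fin d) × EuclideanSpace ℝ (Fin d) =>
          ENNReal.ofReal (‖pr.1‖ ^ q)) := huq.comp measurable_fst
      rw [lintegral_prod _ hum.aemeasurable]
      simp only [lintegral_const, measure_univ, mul_one]
      rw [hμ'', lintegral_smul_measure, smul_eq_mul]
    have hP2 : (∫⁻ pr : EuclideanSpace ℝ (Fin d) × EuclideanSpace ℝ (Fin d),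
        ENNReal.ofReal (‖pr.2‖ ^ q) ∂(μ''.prod ν'')) =
        δ'⁻¹ * ∫⁻ x, ENNReal.ofReal (‖x‖ ^ q) ∂ν' := by
      have hum : Measurable (fun pr : EuclideanSpace ℝ (Fin d) × EuclideanSpace ℝ (Fin d) =>
          ENNReal.ofReal (‖pr.2‖ ^ q)) := huq.comp measurable_snd
      rw [lintegral_prod _ hum.aemeasurable]
      have hconst : (∫⁻ x, ∫⁻ y, ENNReal.ofReal (‖(x, y).2‖ ^ q) ∂ν'' ∂μ'') =
          ∫⁻ _, (∫⁻ y, ENNReal.ofReal (‖y‖ ^ q) ∂ν'') ∂μ'' := rfl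
      rw [hconst, lintegral_const, measure_univ, mul_one, hν'', lintegral_smul_measure, smul_eq_mul]
    -- pointwise bound
    have hKptw : ∀ pr : EuclideanSpace ℝ (Fin d) × EuclideanSpace ℝ (Fin d),
        ENNReal.ofReal (‖pr.1 - pr.2‖ ^ q) ≤
        ENNReal.ofReal (2 ^ q) *
          (ENNReal.ofReal (‖pr.1‖ ^ q) + ENNReal.ofReal (‖pr.2‖ ^ q)) := by
      rintro ⟨x, y⟩
      have hr : ‖x - y‖ ^ q ≤ 2 ^ q * (‖x‖ ^ q + ‖y‖ ^ q) := by
        have h1 : ‖x - y‖ ^ q ≤ (2 * max ‖x‖ ‖y‖) ^ q := by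
          apply Real.rpow_le_rpow (norm_nonneg _) _ hq0.le
          calc ‖x - y‖ ≤ ‖x‖ + ‖y‖ := norm_sub_le _ _
            _ ≤ 2 * max ‖x‖ ‖y‖ := by
                rw [two_mul]
                exact add_le_add (le_max_left _ _) (le_max_right _ _)
        have h2 : (2 * max ‖x‖ ‖y‖) ^ q = 2 ^ q * (max ‖x‖ ‖y‖) ^ q :=
          Real.mul_rpow two_pos.le (le_max_of_le_left (norm_nonneg _))
        have h3 : (max ‖x‖ ‖y‖) ^ q ≤ ‖x‖ ^ q + ‖y‖ ^ q := by
          rcases le_total ‖x‖ ‖y‖ with h | h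
          · rw [max_eq_right h]
            exact le_add_of_nonneg_left (Real.rpow_nonneg (norm_nonneg _) _)
          · rw [max_eq_left h]
            exact le_add_of_nonneg_right (Real.rpow_nonneg (norm_nonneg _) _)
        calc ‖x - y‖ ^ q ≤ 2 ^ q * (max ‖x‖ ‖y‖) ^ q := by rw [← h2]; exact h1
          _ ≤ 2 ^ q * (‖x‖ ^ q + ‖y‖ ^ q) :=
              mul_le_mul_of_nonneg_left h3 (Real.rpow_nonneg two_pos.le _)
      calc ENNReal.ofReal (‖x - y‖ ^ q)
          ≤ ENNReal.ofReal (2 ^ q * (‖x‖ ^ q + ‖y‖ ^ q)) := ENNReal.ofReal_le_ofReal hr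
        _ = ENNReal.ofReal (2 ^ q) *
            (ENNReal.ofReal (‖x‖ ^ q) + ENNReal.ofReal (‖y‖ ^ q)) := by
            rw [ENNReal.ofReal_mul (Real.rpow_nonneg two_pos.le _),
              ENNReal.ofReal_add (Real.rpow_nonneg (norm_nonneg _) _)
                (Real.rpow_nonneg (norm_nonneg _) _)]
    -- Hölder on a measure bounded by μ resp. ν
    have hHolder : ∀ (ρ : Measure (EuclideanSpace ℝ (Fin d))),
        (∫⁻ x, ENNReal.ofReal (‖x‖ ^ q) ∂ρ) ≤
          (∫⁻ x, ENNReal.ofReal (‖x‖ ^ p) ∂ρ) ^ (q / p) * (ρ Set.univ) ^ ((p - q) / p) := by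
      intro ρ
      have hconj : (p / q).HolderConjugate (p / (p - q)) := by
        rw [Real.holderConjugate_iff]
        constructor
        · exact (one_lt_div hq0).mpr hqp
        · rw [← one_div, ← one_div, one_div_div, one_div_div]
          field_simp
          ring
      have key := ENNReal.lintegral_mul_le_Lp_mul_Lq ρ hconj huq.aemeasurable
        (aemeasurable_const : AEMeasurable (fun _ : EuclideanSpace ℝ (Fin d) => (1:ℝ≥0∞)) ρ)
      simp only [mul_one, Pi.mul_apply, ENNReal.one_rpow, lintegral_one, one_mul] at key
      have e1 : ∀ x : EuclideanSpace ℝ (Fin d),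
          ENNReal.ofReal (‖x‖ ^ q) ^ (p / q) = ENNReal.ofReal (‖x‖ ^ p) := by
        intro x
        rw [← ENNReal.ofReal_rpow_of_nonneg (norm_nonneg _) hq0.le,
          ← ENNReal.rpow_mul, mul_div_cancel₀ _ (ne_of_gt hq0),
          ENNReal.ofReal_rpow_of_nonneg (norm_nonneg _) hp0.le]
      have e2 : 1 / (p / q) = q / p := one_div_div _ _
      have e3 : 1 / (p / (p - q)) = (p - q) / p := one_div_div _ _
      calc (∫⁻ x, ENNReal.ofReal (‖x‖ ^ q) ∂ρ)
          ≤ (∫⁻ x, ENNReal.ofReal (‖x‖ ^ q) ^ (p / q) ∂ρ) ^ (1 / (p / q)) *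
            (ρ Set.univ) ^ (1 / (p / (p - q))) := key
        _ = (∫⁻ x, ENNReal.ofReal (‖x‖ ^ p) ∂ρ) ^ (q / p) *
            (ρ Set.univ) ^ ((p - q) / p) := by
            rw [e2, e3, lintegral_congr fun x => e1 x]
    -- apply Hölder to μ' and ν'
    have hμ'le : μ' ≤ μ := by rw [hμsplit]; exact Measure.le_add_left le_rfl
    have hν'le : ν' ≤ ν := by rw [hνsplit]; exact Measure.le_add_left le_rfl
    have hqp' : (0:ℝ) ≤ q / p := div_nonneg hq0.le hp0.le
    have hAq : (∫⁻ x, ENNReal.ofReal (‖x‖ ^ q) ∂μ') ≤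
        Lμ ^ (q / p) * δ' ^ ((p - q) / p) := by
      refine (hHolder μ').trans ?_
      rw [← hδ']
      exact mul_le_mul_left
        (ENNReal.rpow_le_rpow (lintegral_mono' hμ'le le_rfl) hqp') _
    have hBq : (∫⁻ x, ENNReal.ofReal (‖x‖ ^ q) ∂ν') ≤
        Lν ^ (q / p) * δ' ^ ((p - q) / p) := by
      refine (hHolder ν').trans ?_
      rw [hmass]
      exact mul_le_mul_left
        (ENNReal.rpow_le_rpow (lintegral_mono' hν'le le_rfl) hqp') _
    -- split the lintegral over γ
    have hLsplit : L = δ' * ∫⁻ pr, ENNReal.ofReal (‖pr.1 - pr.2‖ ^ q) ∂(μ''.prod ν'') := by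
      rw [hL, hγ, lintegral_add_measure, hLdiag, zero_add,
        lintegral_smul_measure, smul_eq_mul]
    -- bound the product lintegral
    have hu1m : Measurable (fun pr : EuclideanSpace ℝ (Fin d) × EuclideanSpace ℝ (Fin d) =>
        ENNReal.ofReal (‖pr.1‖ ^ q)) := huq.comp measurable_fst
    have hu2m : Measurable (fun pr : EuclideanSpace ℝ (Fin d) × EuclideanSpace ℝ (Fin d) =>
        ENNReal.ofReal (‖pr.2‖ ^ q)) := huq.comp measurable_snd
    have hLprod : (∫⁻ pr, ENNReal.ofReal (‖pr.1 - pr.2‖ ^ q) ∂(μ''.prod ν'')) ≤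
        ENNReal.ofReal (2 ^ q) *
          (δ'⁻¹ * (∫⁻ x, ENNReal.ofReal (‖x‖ ^ q) ∂μ') +
           δ'⁻¹ * (∫⁻ x, ENNReal.ofReal (‖x‖ ^ q) ∂ν')) := by
      calc (∫⁻ pr, ENNReal.ofReal (‖pr.1 - pr.2‖ ^ q) ∂(μ''.prod ν''))
          ≤ ∫⁻ pr, ENNReal.ofReal (2 ^ q) *
              (ENNReal.ofReal (‖pr.1‖ ^ q) + ENNReal.ofReal (‖pr.2‖ ^ q))
              ∂(μ''.prod ν'') := lintegral_mono hKptw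
        _ = ENNReal.ofReal (2 ^ q) *
            ((∫⁻ pr, ENNReal.ofReal (‖pr.1‖ ^ q) ∂(μ''.prod ν'')) +
             (∫⁻ pr, ENNReal.ofReal (‖pr.2‖ ^ q) ∂(μ''.prod ν''))) := by
            rw [lintegral_const_mul' _ _ ENNReal.ofReal_ne_top, lintegral_add_left hu1m]
        _ = _ := by rw [hP1, hP2]
    -- total bound in ℝ≥0∞
    set S : ℝ≥0∞ := Lμ + Lν with hS
    have hStop : S ≠ ⊤ := ENNReal.add_ne_top.mpr ⟨hLμtop, hLνtop⟩
    have hLB : L ≤ ENNReal.ofReal (2 ^ q) * 2 * S ^ (q / p) * δ' ^ ((p - q) / p) := by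
      have step1 : L ≤ ENNReal.ofReal (2 ^ q) *
          ((∫⁻ x, ENNReal.ofReal (‖x‖ ^ q) ∂μ') +
           (∫⁻ x, ENNReal.ofReal (‖x‖ ^ q) ∂ν')) := by
        rw [hLsplit]
        calc δ' * ∫⁻ pr, ENNReal.ofReal (‖pr.1 - pr.2‖ ^ q) ∂(μ''.prod ν'')
            ≤ δ' * (ENNReal.ofReal (2 ^ q) *
              (δ'⁻¹ * (∫⁻ x, ENNReal.ofReal (‖x‖ ^ q) ∂μ') +
               δ'⁻¹ * (∫⁻ x, ENNReal.ofReal (‖x‖ ^ q) ∂ν'))) :=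
              mul_le_mul_right hLprod _
          _ = ENNReal.ofReal (2 ^ q) *
              ((δ' * δ'⁻¹) * (∫⁻ x, ENNReal.ofReal (‖x‖ ^ q) ∂μ') +
               (δ' * δ'⁻¹) * (∫⁻ x, ENNReal.ofReal (‖x‖ ^ q) ∂ν')) := by ring
          _ = _ := by rw [ENNReal.mul_inv_cancel hδ hδtop, one_mul, one_mul]
      have step2 : (∫⁻ x, ENNReal.ofReal (‖x‖ ^ q) ∂μ') +
          (∫⁻ x, ENNReal.ofReal (‖x‖ ^ q) ∂ν') ≤
          2 * S ^ (q / p) * δ' ^ ((p - q) / p) := by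
        calc (∫⁻ x, ENNReal.ofReal (‖x‖ ^ q) ∂μ') +
            (∫⁻ x, ENNReal.ofReal (‖x‖ ^ q) ∂ν')
            ≤ Lμ ^ (q / p) * δ' ^ ((p - q) / p) + Lν ^ (q / p) * δ' ^ ((p - q) / p) :=
              add_le_add hAq hBq
          _ = (Lμ ^ (q / p) + Lν ^ (q / p)) * δ' ^ ((p - q) / p) := (add_mul _ _ _).symm
          _ ≤ (S ^ (q / p) + S ^ (q / p)) * δ' ^ ((p - q) / p) := by
              refine mul_le_mul_left (add_le_add ?_ ?_) _
              · exact ENNReal.rpow_le_rpow le_self_add hqp'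
              · exact ENNReal.rpow_le_rpow le_add_self hqp'
          _ = 2 * S ^ (q / p) * δ' ^ ((p - q) / p) := by ring
      calc L ≤ ENNReal.ofReal (2 ^ q) *
            ((∫⁻ x, ENNReal.ofReal (‖x‖ ^ q) ∂μ') +
             (∫⁻ x, ENNReal.ofReal (‖x‖ ^ q) ∂ν')) := step1
        _ ≤ ENNReal.ofReal (2 ^ q) * (2 * S ^ (q / p) * δ' ^ ((p - q) / p)) :=
            mul_le_mul_right step2 _
        _ = _ := by ring
    have hBdtop : ENNReal.ofReal (2 ^ q) * 2 * S ^ (q / p) * δ' ^ ((p - q) / p) ≠ ⊤ := by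
      apply ENNReal.mul_ne_top
      apply ENNReal.mul_ne_top
      apply ENNReal.mul_ne_top ENNReal.ofReal_ne_top ENNReal.ofNat_ne_top
      · exact ENNReal.rpow_ne_top_of_nonneg hqp' hStop
      · exact ENNReal.rpow_ne_top_of_nonneg (div_nonneg (by linarith) hp0.le) hδtop
    -- pass to real numbers
    have hLr : L.toReal ≤ 2 ^ q * 2 * S.toReal ^ (q / p) * δ'.toReal ^ ((p - q) / p) := by
      have := ENNReal.toReal_mono hBdtop hLB
      rwa [ENNReal.toReal_mul, ENNReal.toReal_mul, ENNReal.toReal_mul,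
        ENNReal.toReal_ofReal (Real.rpow_nonneg two_pos.le _),
        ← ENNReal.toReal_rpow, ← ENNReal.toReal_rpow, ENNReal.toReal_ofNat] at this
    -- the Wasserstein distance is at most the cost of γ
    have hWle : wassersteinDist q μ ν ≤ (∫ pr, ‖pr.1 - pr.2‖ ^ q ∂γ) ^ (1 / q) :=
      csInf_le hbdd ⟨γ, hγfst, hγsnd, rfl⟩
    have hθ0 : (0:ℝ) ≤ 1 / q - 1 / p := by
      rw [sub_nonneg]
      exact one_div_le_one_div_of_le hq0 hqp.le
    have hdrDr : δ'.toReal ≤ ∫ x, |f x - g x| := by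
      have := ENNReal.toReal_mono ENNReal.ofReal_ne_top hδ'le
      rwa [ENNReal.toReal_ofReal (integral_nonneg fun x => abs_nonneg _)] at this
    -- final computation
    rw [hMμeq, hMνeq, ← ENNReal.toReal_add hLμtop hLνtop, ← hS]
    refine hWle.trans ?_
    rw [hIeq]
    calc L.toReal ^ (1 / q)
        ≤ (2 ^ q * 2 * S.toReal ^ (q / p) * δ'.toReal ^ ((p - q) / p)) ^ (1 / q) :=
          Real.rpow_le_rpow ENNReal.toReal_nonneg hLr (by positivity)
      _ = 2 ^ ((q + 1) / q) * S.toReal ^ (1 / p) *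
          δ'.toReal ^ (1 / q - 1 / p) := by
          rw [Real.mul_rpow (by positivity) (Real.rpow_nonneg ENNReal.toReal_nonneg _),
            Real.mul_rpow (by positivity) (Real.rpow_nonneg ENNReal.toReal_nonneg _),
            show (2:ℝ) ^ q * 2 = 2 ^ (q + 1) from (Real.rpow_add_one two_ne_zero q).symm,
            ← Real.rpow_mul (by norm_num : (0:ℝ) ≤ 2),
            ← Real.rpow_mul ENNReal.toReal_nonneg,
            ← Real.rpow_mul ENNReal.toReal_nonneg]
          rw [mul_one_div,
            show q / p * (1 / q) = 1 / p by field_simp,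
            show (p - q) / p * (1 / q) = 1 / q - 1 / p by
              rw [div_sub_div _ _ hq0.ne' hp0.ne', one_mul, mul_one, div_mul_div_comm,
                mul_one, mul_comm p q]]
      _ ≤ 2 ^ ((q + 1) / q) * S.toReal ^ (1 / p) *
          (∫ x, |f x - g x|) ^ (1 / q - 1 / p) := by
          refine mul_le_mul_of_nonneg_left ?_ (by positivity)
          exact Real.rpow_le_rpow ENNReal.toReal_nonneg hdrDr hθ0
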